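/- For all bicomplex numbers Z and W one has ‖Z·W‖ ≤ √2·‖Z‖·‖W‖, and this inequality is sharp: for Z = W = e₁ = (1/2, −i/2) one has ‖e₁·e₁‖ = √2·‖e₁‖·‖e₁‖. -/

import Mathlib

open Complex Matrix Kronecker BigOperators

open scoped ComplexOrder

/-- Bicomplex numbers, modeled as pairs `(z₁, z₂) ∈ ℂ × ℂ` representing `z₁ + j z₂`.
Addition is the componentwise (Prod) addition. -/
abbrev BC : Type := ℂ × ℂ

noncomputable section

/-- Bicomplex multiplication: `(z₁,z₂)·(w₁,w₂) = (z₁w₁ − z₂w₂, z₁w₂ + z₂w₁)`. -/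
def bcMul (z w : BC) : BC := (z.1 * w.1 - z.2 * w.2, z.1 * w.2 + z.2 * w.1)

/-- The `*`-conjugate `Z* = conj z₁ − j conj z₂`. -/
def bcStar (z : BC) : BC := ((starRingEnd ℂ) z.1, -((starRingEnd ℂ) z.2))

/-- First idempotent component `λ₁ = z₁ − i z₂`. -/
def idem1 (z : BC) : ℂ := z.1 - Complex.I * z.2

/-- Second idempotent component `λ₂ = z₁ + i z₂`. -/
def idem2 (z : BC) : ℂ := z.1 + Complex.I * z.2

/-- Membership in `𝔻⁺`: both idempotent components are nonnegative real numbers. -/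
def inDplus (z : BC) : Prop :=
  (idem1 z).im = 0 ∧ 0 ≤ (idem1 z).re ∧ (idem2 z).im = 0 ∧ 0 ≤ (idem2 z).re

/-- A bicomplex matrix `A = A₁ + j A₂` is a pair of complex matrices. -/
abbrev BCMat (I J : Type) : Type := Matrix I J ℂ × Matrix I J ℂ

/-- Bicomplex matrix multiplication, induced by bicomplex multiplication. -/
def bmul {I J K : Type} [Fintype J] (A : BCMat I J) (B : BCMat J K) : BCMat I K :=
  (A.1 * B.1 - A.2 * B.2, A.1 * B.2 + A.2 * B.1)

/-- `(A*)ᵗ`: the entrywise `*`-conjugate followed by transpose. -/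
def bcStarT {I J : Type} (A : BCMat I J) : BCMat J I := (A.1ᴴ, -(A.2ᴴ))

/-- The `(j,k)` entry of a bicomplex matrix, as a bicomplex number. -/
def bcEntry {I J : Type} (A : BCMat I J) (j : I) (k : J) : BC := (A.1 j k, A.2 j k)

/-- First idempotent component `𝒜₁ = A₁ − i A₂` of a bicomplex matrix. -/
def midem1 {I J : Type} (A : BCMat I J) : Matrix I J ℂ := A.1 - Complex.I • A.2

/-- Second idempotent component `𝒜₂ = A₁ + i A₂` of a bicomplex matrix. -/
def midem2 {I J : Type} (A : BCMat I J) : Matrix I J ℂ := A.1 + Complex.I • A.2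

/-- The bicomplex number `(c*)ᵗ · A · c`. -/
def quadForm {I : Type} [Fintype I] (A : BCMat I I) (c : I → BC) : BC :=
  ∑ j, ∑ k, bcMul (bcStar (c j)) (bcMul (bcEntry A j k) (c k))

/-- `A` is hyperbolic positive if `(c*)ᵗ · A · c ∈ 𝔻⁺` for every bicomplex vector `c`. -/
def HypPos {I : Type} [Fintype I] (A : BCMat I I) : Prop :=
  ∀ c : I → BC, inDplus (quadForm A c)

/-- Bicomplex trace `Tr(A) = Tr(A₁) + j Tr(A₂)`. -/
def bcTrace {I : Type} [Fintype I] (A : BCMat I I) : BC := (A.1.trace, A.2.trace)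

/-- The bicomplex tensor product
`A ⊗ⱼ B = (A₁⊗B₁ − A₂⊗B₂) + j (A₁⊗B₂ + A₂⊗B₁)`. -/
def bkron {I J K L : Type} (A : BCMat I J) (B : BCMat K L) : BCMat (I × K) (J × L) :=
  (A.1 ⊗ₖ B.1 - A.2 ⊗ₖ B.2, A.1 ⊗ₖ B.2 + A.2 ⊗ₖ B.1)

end

noncomputable section

/-- The Euclidean norm `‖Z‖ = √(|z₁|² + |z₂|²)` of a bicomplex number. -/
def bcNorm (z : BC) : ℝ := Real.sqrt (‖z.1‖ ^ 2 + ‖z.2‖ ^ 2)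

/-- `‖Z·W‖ ≤ √2 ‖Z‖ ‖W‖`, with equality for `Z = W = e₁ = (1/2, −i/2)`. -/
theorem bc_norm_mul_le :
    (∀ Z W : BC, bcNorm (bcMul Z W) ≤ Real.sqrt 2 * (bcNorm Z * bcNorm W)) ∧
    (bcNorm (bcMul ((1 / 2 : ℂ), -(Complex.I / 2)) ((1 / 2 : ℂ), -(Complex.I / 2))) =
      Real.sqrt 2 * (bcNorm ((1 / 2 : ℂ), -(Complex.I / 2)) *
        bcNorm ((1 / 2 : ℂ), -(Complex.I / 2)))) := by
  constructor
  · intro Z W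
    obtain ⟨a,b⟩ := Z; obtain ⟨c,d⟩ := W
    show Real.sqrt _ ≤ _
    have hA : (0:ℝ) ≤ ‖a‖ ^ 2 + ‖b‖ ^ 2 := by positivity
    have hB : (0:ℝ) ≤ ‖c‖ ^ 2 + ‖d‖ ^ 2 := by positivity
    have key : ‖(a*c - b*d)‖ ^ 2 + ‖(a*d + b*c)‖ ^ 2 ≤
        2 * ((‖a‖ ^ 2 + ‖b‖ ^ 2) * (‖c‖ ^ 2 + ‖d‖ ^ 2)) := by
      simp only [Complex.sq_norm, Complex.normSq_apply, Complex.sub_re, Complex.sub_im,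
        Complex.add_re, Complex.add_im, Complex.mul_re, Complex.mul_im]
      nlinarith [sq_nonneg (a.re*c.re - a.im*c.im + (b.re*d.re - b.im*d.im)),
        sq_nonneg (a.re*c.im + a.im*c.re + (b.re*d.im + b.im*d.re)),
        sq_nonneg (a.re*d.re - a.im*d.im - (b.re*c.re - b.im*c.im)),
        sq_nonneg (a.re*d.im + a.im*d.re - (b.re*c.im + b.im*c.re))]
    calc Real.sqrt (‖(bcMul (a,b) (c,d)).1‖ ^ 2 + ‖(bcMul (a,b) (c,d)).2‖ ^ 2)
        ≤ Real.sqrt (2 * ((‖a‖ ^ 2 + ‖b‖ ^ 2) * (‖c‖ ^ 2 + ‖d‖ ^ 2))) := by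
          apply Real.sqrt_le_sqrt
          simpa [bcMul] using key
      _ = Real.sqrt 2 * (bcNorm (a,b) * bcNorm (c,d)) := by
          rw [Real.sqrt_mul (by norm_num : (0:ℝ) ≤ 2), Real.sqrt_mul hA]
          rfl
  · have h4 : Real.sqrt 4 = 2 := by
      rw [show (4:ℝ) = 2^2 by norm_num]; exact Real.sqrt_sq (by norm_num)
    have h1 : bcMul ((1 / 2 : ℂ), -(Complex.I / 2)) ((1 / 2 : ℂ), -(Complex.I / 2)) =
        ((1 / 2 : ℂ), -(Complex.I / 2)) := by
      simp [bcMul, Prod.ext_iff]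
      ring_nf
      simp [Complex.I_sq]
      ring
    rw [h1]
    have h2 : bcNorm ((1 / 2 : ℂ), -(Complex.I / 2)) = Real.sqrt (1/2) := by
      simp [bcNorm, norm_div, Complex.norm_I]
      norm_num
    rw [h2]
    rw [show Real.sqrt (1/2) * Real.sqrt (1/2) = 1/2 by
      rw [← Real.sqrt_mul (by norm_num)]; norm_num [h4]]
    rw [show (1/2 : ℝ) = Real.sqrt (1/2) * Real.sqrt (1/2) from by
      rw [← Real.sqrt_mul (by norm_num)]; norm_num [h4]]
    rw [← mul_assoc, ← Real.sqrt_mul (by norm_num)]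
    norm_num [h4]

end
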